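/- Let j : z → so(v) be of Heisenberg type with dim z = r, {Z_α} an orthonormal basis of z, and define Φ : v∧v → v∧v by Φ(X∧Y) = Σ_{α=1}^r j_{Z_α}X ∧ j_{Z_α}Y (extended linearly). Then for every Z ∈ z, Φ(E_Z) = (2-r)·E_Z, where E_Z = Σ_k X_k ∧ j_Z X_k. -/
import Mathlib


open scoped RealInnerProductSpace

private lemma aux_sum {V : Type*} [NormedAddCommGroup V] [InnerProductSpace ℝ V]
    {m : ℕ} (X : OrthonormalBasis (Fin m) ℝ V) (Y : Fin m → V)
    (hY : ∀ x : V, ∑ k, ⟪Y k, x⟫ • Y k = x) (A : V →ₗ[ℝ] V) :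
    ∑ k, ExteriorAlgebra.ι ℝ (Y k) * ExteriorAlgebra.ι ℝ (A (Y k))
      = ∑ i, ∑ j', ⟪X j', A (X i)⟫ •
          (ExteriorAlgebra.ι ℝ (X i) * ExteriorAlgebra.ι ℝ (X j')) := by
  have hrep : ∀ v : V, (ExteriorAlgebra.ι ℝ v : ExteriorAlgebra ℝ V)
      = ∑ i, ⟪X i, v⟫ • ExteriorAlgebra.ι ℝ (X i) := by
    intro v
    conv_lhs => rw [← X.sum_repr' v]
    simp
  calc ∑ k, ExteriorAlgebra.ι ℝ (Y k) * ExteriorAlgebra.ι ℝ (A (Y k))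
      = ∑ k, ∑ i, ∑ j', (⟪X i, Y k⟫ * ⟪X j', A (Y k)⟫) •
          (ExteriorAlgebra.ι ℝ (X i) * ExteriorAlgebra.ι ℝ (X j')) := by
        refine Finset.sum_congr rfl fun k _ => ?_
        rw [hrep (Y k), hrep (A (Y k)), Finset.sum_mul]
        refine Finset.sum_congr rfl fun i _ => ?_
        rw [Finset.mul_sum]
        refine Finset.sum_congr rfl fun j' _ => ?_
        rw [smul_mul_smul_comm]
    _ = ∑ i, ∑ j', (∑ k, ⟪X i, Y k⟫ * ⟪X j', A (Y k)⟫) •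
          (ExteriorAlgebra.ι ℝ (X i) * ExteriorAlgebra.ι ℝ (X j')) := by
        rw [Finset.sum_comm]
        refine Finset.sum_congr rfl fun i _ => ?_
        rw [Finset.sum_comm]
        refine Finset.sum_congr rfl fun j' _ => ?_
        rw [Finset.sum_smul]
    _ = _ := by
        refine Finset.sum_congr rfl fun i _ => Finset.sum_congr rfl fun j' _ => ?_
        congr 1
        have hAX : A (X i) = ∑ k, ⟪X i, Y k⟫ • A (Y k) := by
          conv_lhs => rw [← hY (X i)]
          simp [real_inner_comm]
        rw [hAX, inner_sum]
        simp [real_inner_smul_right]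

theorem stmt8 {V Z : Type*}
    [NormedAddCommGroup V] [InnerProductSpace ℝ V] [FiniteDimensional ℝ V]
    [NormedAddCommGroup Z] [InnerProductSpace ℝ Z] [FiniteDimensional ℝ Z]
    (j : Z →ₗ[ℝ] (V →ₗ[ℝ] V))
    (hskew : ∀ (z : Z) (x y : V), ⟪j z x, y⟫ = -⟪x, j z y⟫)
    (hheis : ∀ z w : Z, j z ∘ₗ j w + j w ∘ₗ j z
      = -(2 * ⟪z, w⟫) • (LinearMap.id : V →ₗ[ℝ] V))
    (m r : ℕ) (X : OrthonormalBasis (Fin m) ℝ V) (b : OrthonormalBasis (Fin r) ℝ Z)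
    (z : Z) :
    ∑ α : Fin r, ∑ k : Fin m,
        ExteriorAlgebra.ι ℝ (j (b α) (X k)) * ExteriorAlgebra.ι ℝ (j (b α) (j z (X k)))
      = ((2 : ℝ) - r) • ∑ k : Fin m,
          ExteriorAlgebra.ι ℝ (X k) * ExteriorAlgebra.ι ℝ (j z (X k)) := by
  have hone : ∀ α : Fin r, ⟪b α, b α⟫ = (1 : ℝ) := by
    intro α
    rw [real_inner_self_eq_norm_sq, b.orthonormal.1 α]
    norm_num
  have hheis' : ∀ (w w' : Z) (x : V),
      j w (j w' x) + j w' (j w x) = -(2 * ⟪w, w'⟫) • x := by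
    intro w w' x
    have := congrArg (fun f : V →ₗ[ℝ] V => f x) (hheis w w')
    simpa using this
  have hsq : ∀ (α : Fin r) (x : V), j (b α) (j (b α) x) = -x := by
    intro α x
    have h := hheis' (b α) (b α) x
    rw [hone α] at h
    have h2 : (2 : ℝ) • j (b α) (j (b α) x) = (2 : ℝ) • (-x) := by
      rw [two_smul]
      convert h using 1
      norm_num
    exact smul_right_injective V (by norm_num : (2:ℝ) ≠ 0) h2
  have hY : ∀ (α : Fin r) (x : V),
      ∑ k, ⟪j (b α) (X k), x⟫ • j (b α) (X k) = x := by
    intro α x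
    have h1 : ∑ k, ⟪j (b α) (X k), x⟫ • j (b α) (X k)
        = j (b α) (∑ k, (-⟪X k, j (b α) x⟫) • X k) := by
      rw [map_sum]
      refine Finset.sum_congr rfl fun k _ => ?_
      rw [hskew, map_smul]
    have h2 : ∑ k, (-⟪X k, j (b α) x⟫) • X k = -(j (b α) x) := by
      simp only [neg_smul]
      rw [Finset.sum_neg_distrib, X.sum_repr']
    rw [h1, h2, map_neg, hsq, neg_neg]
  have hA : ∀ (α : Fin r) (k : Fin m),
      j (b α) (j z (X k))
        = (-(j z) + (2 * ⟪b α, z⟫) • j (b α)) (j (b α) (X k)) := by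
    intro α k
    have h : j (b α) (j z (X k)) = -(2 * ⟪b α, z⟫) • X k - j z (j (b α) (X k)) := by
      rw [eq_sub_iff_add_eq]
      exact hheis' (b α) z (X k)
    rw [h]
    simp only [LinearMap.add_apply, LinearMap.neg_apply, LinearMap.smul_apply,
      hsq α, smul_neg, neg_smul]
    abel
  have key : ∀ α : Fin r,
      ∑ k, ExteriorAlgebra.ι ℝ (j (b α) (X k)) * ExteriorAlgebra.ι ℝ (j (b α) (j z (X k)))
        = ∑ i, ∑ j', ⟪X j', (-(j z) + (2 * ⟪b α, z⟫) • j (b α)) (X i)⟫ •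
            (ExteriorAlgebra.ι ℝ (X i) * ExteriorAlgebra.ι ℝ (X j')) := by
    intro α
    rw [← aux_sum X (fun k => j (b α) (X k)) (hY α) (-(j z) + (2 * ⟪b α, z⟫) • j (b α))]
    exact Finset.sum_congr rfl fun k _ => by rw [← hA α k]
  rw [Finset.sum_congr rfl (fun α _ => key α),
    aux_sum X (fun k => X k) (fun x => X.sum_repr' x) (j z), Finset.smul_sum,
    Finset.sum_comm]
  refine Finset.sum_congr rfl fun i _ => ?_
  rw [Finset.smul_sum, Finset.sum_comm]
  refine Finset.sum_congr rfl fun j' _ => ?_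
  rw [← Finset.sum_smul, smul_smul]
  congr 1
  have hz : (j z : V →ₗ[ℝ] V) = ∑ α, ⟪b α, z⟫ • j (b α) := by
    conv_lhs => rw [← b.sum_repr' z]
    simp
  have hsum2 : ∑ α, (2 * ⟪b α, z⟫) * ⟪X j', j (b α) (X i)⟫
      = 2 * ⟪X j', j z (X i)⟫ := by
    conv_rhs => rw [hz]
    simp only [LinearMap.sum_apply, LinearMap.smul_apply, inner_sum,
      real_inner_smul_right, Finset.mul_sum]
    exact Finset.sum_congr rfl fun α _ => by ring
  calc ∑ α, ⟪X j', (-(j z) + (2 * ⟪b α, z⟫) • j (b α)) (X i)⟫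
      = ∑ α, (-⟪X j', j z (X i)⟫ + (2 * ⟪b α, z⟫) * ⟪X j', j (b α) (X i)⟫) := by
        refine Finset.sum_congr rfl fun α _ => ?_
        simp [inner_add_right, real_inner_smul_right, inner_neg_right]
    _ = ((2 : ℝ) - r) * ⟪X j', j z (X i)⟫ := by
        rw [Finset.sum_add_distrib, hsum2, Finset.sum_const, Finset.card_fin]
        ring
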